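/- The inclusion LZG ⊇ ZG is strict: the 4-element semigroup S = {a, b, ab, 0} with a² = a, b² = b, ba = 0 (the syntactic semigroup of a*b*) is not in ZG, but every local monoid eSe of S satisfies the ZG equation x^{ω+1} y = y x^{ω+1}. -/

import Mathlib

/-- `spow x n` is `x ^ n` for `n ≥ 1` (with the junk value `x` at `n = 0`). -/
def spow {S : Type*} [Mul S] (x : S) : ℕ → S
  | 0 => x
  | 1 => x
  | n + 2 => spow x (n + 1) * x

/-- `n` is the idempotent power of `x`: the least positive integer such that
`x ^ n` is idempotent. -/
def IsIdemPow {S : Type*} [Mul S] (x : S) (n : ℕ) : Prop :=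
  0 < n ∧ spow x n * spow x n = spow x n ∧
    ∀ m, 0 < m → spow x m * spow x m = spow x m → n ≤ m

/-- The syntactic semigroup of `a*b*`: `{a, b, ab, 0}` with
`a² = a`, `b² = b`, `ba = 0`. -/
inductive S4 where
  | a | b | ab | z
deriving DecidableEq

instance : Fintype S4 := ⟨{.a, .b, .ab, .z}, by intro x; cases x <;> simp⟩

/-- The multiplication table of `S4`. -/
def S4.mul : S4 → S4 → S4
  | .a, .a => .a
  | .a, .b => .ab
  | .a, .ab => .ab
  | .b, .b => .b
  | .ab, .b => .ab
  | _, _ => .z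

instance : Mul S4 := ⟨S4.mul⟩

instance : Semigroup S4 := { (inferInstance : Mul S4) with mul_assoc := by decide }

lemma S4.cube : ∀ x : S4, x * x * x = x * x := by decide

lemma S4.comm1 : ∀ e s t : S4, e * e = e →
    (e * s * e) * (e * t * e) = (e * t * e) * (e * s * e) := by decide

lemma S4.comm2 : ∀ e s t : S4, e * e = e →
    ((e * s * e) * (e * s * e)) * (e * t * e) = (e * t * e) * ((e * s * e) * (e * s * e)) := by
  decide

lemma spow_mem (x : S4) : ∀ n, spow x n = x ∨ spow x n = x * x
  | 0 => Or.inl rfl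
  | 1 => Or.inl rfl
  | (n + 2) => by
    rcases spow_mem x (n + 1) with h | h <;> rw [spow, h]
    · exact Or.inr rfl
    · exact Or.inr (S4.cube x)

/-- `S4` witnesses the strictness of `ZG ⊆ LZG`: it is not in `ZG`, but every
local monoid `e S4 e` satisfies the ZG equation. -/
theorem lzg_strict :
    (¬ ∀ (x y : S4) (n : ℕ), IsIdemPow x n →
        spow x (n + 1) * y = y * spow x (n + 1)) ∧
    (∀ e : S4, e * e = e →
      ∀ x y : S4, (∃ s, x = e * s * e) → (∃ s, y = e * s * e) →
        ∀ n : ℕ, IsIdemPow x n →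
          spow x (n + 1) * y = y * spow x (n + 1)) := by
  constructor
  · intro h
    have := h S4.a S4.b 1 ⟨one_pos, by decide, fun m hm _ => hm⟩
    exact absurd this (by decide)
  · intro e he x y hx hy n hn
    obtain ⟨s, rfl⟩ := hx
    obtain ⟨t, rfl⟩ := hy
    rcases spow_mem (e * s * e) (n + 1) with h | h <;> rw [h]
    · exact S4.comm1 e s t he
    · exact S4.comm2 e s t he
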